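/- On the open set U₀ := {(x,y,z) ∈ ℝ³ : x² + y² > 1/4}, define ρ(x,y,z) := √(x² + y²), let w_φ : (1/2, ∞) → ℝ be given by w_φ(ρ) := 4(ρ − 1/2)²(ρ − 1) for 1/2 < ρ < 1 and w_φ(ρ) := ρ − 1 for ρ ≥ 1, and define the C¹ one-form ω on U₀ by ω(x,y,z) := ρ·(x dx + y dy) + (w_φ(ρ)/ρ²)·(−y dx + x dy). Then Euler's multiplier does not exist in any neighbourhood of the cylinder {x² + y² = 1}: for every open set U with {(x,y,z) ∈ ℝ³ : x² + y² = 1} ⊆ U ⊆ U₀, there exist no C¹ function f : U → ℝ and no function λ : U → ℝ with λ(p) ≠ 0 for all p ∈ U such that Df(p) = λ(p) • ω(p) for all p ∈ U. -/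

import Mathlib

/-- The profile function `w_φ` of the introductory example, defined for `ρ > 1/2`. -/
noncomputable def wPhi (ρ : ℝ) : ℝ :=
  if ρ < 1 then 4 * (ρ - 1 / 2) ^ 2 * (ρ - 1) else ρ - 1


noncomputable def wPhi' (ρ : ℝ) : ℝ :=
  if ρ < 1 then 8 * (ρ - 1 / 2) * (ρ - 1) + 4 * (ρ - 1 / 2) ^ 2 else 1

noncomputable def gAux (ρ : ℝ) : ℝ := if ρ < 1 then 4 * (ρ - 1 / 2) ^ 2 else 1

lemma continuous_gAux : Continuous gAux := by
  have : gAux = fun x : ℝ => if (1:ℝ) ≤ x then 1 else 4 * (x - 1 / 2) ^ 2 := by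
    funext x
    rcases lt_or_ge x 1 with hx | hx
    · simp [gAux, hx, not_le.mpr hx]
    · simp [gAux, not_lt.mpr hx, hx]
  rw [this]
  exact Continuous.if_le continuous_const (by fun_prop) continuous_const continuous_id
    (fun x hx => by rw [← hx]; norm_num)

lemma continuous_wPhi' : Continuous wPhi' := by
  have : wPhi' = fun x : ℝ => if (1:ℝ) ≤ x then 1 else
      8 * (x - 1 / 2) * (x - 1) + 4 * (x - 1 / 2) ^ 2 := by
    funext x
    rcases lt_or_ge x 1 with hx | hx
    · simp [wPhi', hx, not_le.mpr hx]
    · simp [wPhi', not_lt.mpr hx, hx]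
  rw [this]
  exact Continuous.if_le continuous_const (by fun_prop) continuous_const continuous_id
    (fun x hx => by rw [← hx]; norm_num)

lemma hasDerivAt_wPhi (ρ : ℝ) : HasDerivAt wPhi (wPhi' ρ) ρ := by
  have hid : HasDerivAt (fun x : ℝ => x) 1 ρ := hasDerivAt_id ρ
  rcases lt_trichotomy ρ 1 with h | h | h
  · have hp : HasDerivAt (fun x : ℝ => 4 * (x - 1 / 2) ^ 2 * (x - 1))
        (8 * (ρ - 1/2) * (ρ - 1) + 4 * (ρ - 1/2) ^ 2) ρ := by
      have := ((((hid.sub_const (1/2)).pow 2).const_mul 4).mul (hid.sub_const 1))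
      simp only [Pi.mul_def, Pi.pow_def] at this
      refine this.congr_deriv ?_
      ring
    have heq : wPhi =ᶠ[nhds ρ] fun x => 4 * (x - 1 / 2) ^ 2 * (x - 1) := by
      filter_upwards [Iio_mem_nhds h] with x hx
      simp only [Set.mem_Iio] at hx
      simp [wPhi, hx]
    have := hp.congr_of_eventuallyEq heq
    simpa [wPhi', h] using this
  · subst h
    rw [hasDerivAt_iff_tendsto_slope]
    have hs : slope wPhi 1 =ᶠ[nhdsWithin 1 {(1:ℝ)}ᶜ] gAux := by
      filter_upwards [self_mem_nhdsWithin] with x hx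
      simp only [Set.mem_compl_iff, Set.mem_singleton_iff] at hx
      have hx1 : x - 1 ≠ 0 := sub_ne_zero.mpr hx
      have hw1 : wPhi 1 = 0 := by simp [wPhi]
      have hsl : slope wPhi 1 x = wPhi x / (x - 1) := by
        rw [slope_def_field, hw1, sub_zero]
      rw [hsl]
      rcases lt_or_ge x 1 with h | h
      · rw [wPhi, gAux, if_pos h, if_pos h, mul_div_assoc, div_self hx1, mul_one]
      · have h' : ¬ x < 1 := not_lt.mpr h
        rw [wPhi, gAux, if_neg h', if_neg h', div_self hx1]
    have hg : Filter.Tendsto gAux (nhdsWithin 1 {(1:ℝ)}ᶜ) (nhds (wPhi' 1)) := by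
      have h1 : gAux 1 = wPhi' 1 := by norm_num [gAux, wPhi']
      exact h1 ▸ (continuous_gAux.continuousAt.tendsto).mono_left nhdsWithin_le_nhds
    exact hg.congr' hs.symm
  · have hp : HasDerivAt (fun x : ℝ => x - 1) 1 ρ := hid.sub_const 1
    have heq : wPhi =ᶠ[nhds ρ] fun x => x - 1 := by
      filter_upwards [Ioi_mem_nhds h] with x hx
      simp [wPhi, not_lt.mpr (le_of_lt (Set.mem_Ioi.mp hx))]
    have := hp.congr_of_eventuallyEq heq
    simpa [wPhi', not_lt.mpr (le_of_lt h)] using this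

lemma contDiff_wPhi : ContDiff ℝ 1 wPhi := by
  rw [contDiff_one_iff_deriv]
  refine ⟨fun x => (hasDerivAt_wPhi x).differentiableAt, ?_⟩
  have : deriv wPhi = wPhi' := funext fun x => (hasDerivAt_wPhi x).deriv
  rw [this]; exact continuous_wPhi'

/-- The one-form `ω = w_ρ dρ + w_φ dφ + w_z dz` of the introductory example, written in
Cartesian coordinates on the region `ρ > 1/2` (where `w_ρ = ρ²`, `w_z = 0`):
`ω(x,y,z) = ρ·(x dx + y dy) + (w_φ(ρ)/ρ²)·(−y dx + x dy)` with `ρ = √(x² + y²)`. -/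
noncomputable def ωCyl (p : Fin 3 → ℝ) : (Fin 3 → ℝ) →L[ℝ] ℝ :=
  (Real.sqrt (p 0 ^ 2 + p 1 ^ 2) * p 0
      - wPhi (Real.sqrt (p 0 ^ 2 + p 1 ^ 2)) * p 1 / (p 0 ^ 2 + p 1 ^ 2)) •
    (ContinuousLinearMap.proj 0 : (Fin 3 → ℝ) →L[ℝ] ℝ)
  + (Real.sqrt (p 0 ^ 2 + p 1 ^ 2) * p 1
      + wPhi (Real.sqrt (p 0 ^ 2 + p 1 ^ 2)) * p 0 / (p 0 ^ 2 + p 1 ^ 2)) •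
    (ContinuousLinearMap.proj 1 : (Fin 3 → ℝ) →L[ℝ] ℝ)

lemma contDiffOn_omega :
    ContDiffOn ℝ 1 ωCyl {p : Fin 3 → ℝ | 1 / 4 < p 0 ^ 2 + p 1 ^ 2} := by
  set S := {p : Fin 3 → ℝ | 1 / 4 < p 0 ^ 2 + p 1 ^ 2} with hS
  have h0 : ContDiff ℝ 1 (fun p : Fin 3 → ℝ => p 0) :=
    (ContinuousLinearMap.proj 0 : (Fin 3 → ℝ) →L[ℝ] ℝ).contDiff
  have h1 : ContDiff ℝ 1 (fun p : Fin 3 → ℝ => p 1) :=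
    (ContinuousLinearMap.proj 1 : (Fin 3 → ℝ) →L[ℝ] ℝ).contDiff
  have hs : ContDiff ℝ 1 (fun p : Fin 3 → ℝ => p 0 ^ 2 + p 1 ^ 2) := by fun_prop
  have hsne : ∀ p ∈ S, p 0 ^ 2 + p 1 ^ 2 ≠ 0 := by
    intro p hp
    have : (1:ℝ)/4 < p 0 ^ 2 + p 1 ^ 2 := hp
    positivity
  have hsqrt : ContDiffOn ℝ 1 (fun p : Fin 3 → ℝ => Real.sqrt (p 0 ^ 2 + p 1 ^ 2)) S :=
    hs.contDiffOn.sqrt hsne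
  have hw : ContDiffOn ℝ 1 (fun p : Fin 3 → ℝ => wPhi (Real.sqrt (p 0 ^ 2 + p 1 ^ 2))) S :=
    contDiff_wPhi.comp_contDiffOn hsqrt
  have hA : ContDiffOn ℝ 1 (fun p : Fin 3 → ℝ => Real.sqrt (p 0 ^ 2 + p 1 ^ 2) * p 0
      - wPhi (Real.sqrt (p 0 ^ 2 + p 1 ^ 2)) * p 1 / (p 0 ^ 2 + p 1 ^ 2)) S :=
    (hsqrt.mul h0.contDiffOn).sub ((hw.mul h1.contDiffOn).div hs.contDiffOn hsne)
  have hB : ContDiffOn ℝ 1 (fun p : Fin 3 → ℝ => Real.sqrt (p 0 ^ 2 + p 1 ^ 2) * p 1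
      + wPhi (Real.sqrt (p 0 ^ 2 + p 1 ^ 2)) * p 0 / (p 0 ^ 2 + p 1 ^ 2)) S :=
    (hsqrt.mul h1.contDiffOn).add ((hw.mul h0.contDiffOn).div hs.contDiffOn hsne)
  exact (hA.smul contDiffOn_const).add (hB.smul contDiffOn_const)


/-- The one-form `ωCyl` is C¹ on `U₀ = {ρ > 1/2}`, but Euler's multiplier for it does
not exist in any neighbourhood of the cylinder `{x² + y² = 1}`. -/
theorem no_euler_multiplier_near_cylinder :
    ContDiffOn ℝ 1 ωCyl {p : Fin 3 → ℝ | 1 / 4 < p 0 ^ 2 + p 1 ^ 2} ∧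
    ∀ U : Set (Fin 3 → ℝ), IsOpen U →
      {p : Fin 3 → ℝ | p 0 ^ 2 + p 1 ^ 2 = 1} ⊆ U →
      U ⊆ {p : Fin 3 → ℝ | 1 / 4 < p 0 ^ 2 + p 1 ^ 2} →
      ¬ ∃ (f : (Fin 3 → ℝ) → ℝ) (lam : (Fin 3 → ℝ) → ℝ),
          ContDiffOn ℝ 1 f U ∧ (∀ p ∈ U, lam p ≠ 0) ∧
          ∀ p ∈ U, fderiv ℝ f p = lam p • ωCyl p := by
  refine ⟨contDiffOn_omega, ?_⟩
  rintro U hUopen hcyl hsub ⟨f, lam, hf, hlam, hDf⟩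
  -- the compact circle at z = 0
  set K : Set (Fin 3 → ℝ) :=
    (fun t : ℝ => ![Real.cos t, Real.sin t, (0:ℝ)]) '' Set.Icc 0 (2 * Real.pi) with hKdef
  have hK : IsCompact K := isCompact_Icc.image (by
    apply continuous_pi; intro i; fin_cases i <;> simp <;> fun_prop)
  have hKU : K ⊆ U := by
    rintro _ ⟨t, -, rfl⟩
    apply hcyl
    show (![Real.cos t, Real.sin t, (0:ℝ)]) 0 ^ 2 + (![Real.cos t, Real.sin t, (0:ℝ)]) 1 ^ 2 = 1
    simp [Real.cos_sq_add_sin_sq]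
  obtain ⟨ε, hε, hthick⟩ := hK.exists_thickening_subset_open hUopen hKU
  set δ : ℝ := min (ε / 2) (1 / 2) with hδdef
  have hδ0 : 0 < δ := lt_min (by linarith) (by norm_num)
  have hδε : δ < ε := lt_of_le_of_lt (min_le_left _ _) (by linarith)
  set ρ : ℝ := 1 + δ with hρdef
  have hρ1 : 1 < ρ := by simp [hρdef]; linarith
  have hρ0 : 0 < ρ := by linarith
  set c : ℝ → (Fin 3 → ℝ) := fun t => ![ρ * Real.cos t, ρ * Real.sin t, 0] with hcdef
  have hmem : ∀ t ∈ Set.Icc 0 (2 * Real.pi), c t ∈ U := by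
    intro t ht
    apply hthick
    rw [Metric.mem_thickening_iff]
    refine ⟨![Real.cos t, Real.sin t, 0], ⟨t, ht, rfl⟩, lt_of_le_of_lt ?_ hδε⟩
    rw [dist_pi_le_iff hδ0.le]
    intro i
    fin_cases i
    · show dist (ρ * Real.cos t) (Real.cos t) ≤ δ
      rw [Real.dist_eq, show ρ * Real.cos t - Real.cos t = δ * Real.cos t by rw [hρdef]; ring,
        abs_mul, abs_of_pos hδ0]
      exact mul_le_of_le_one_right hδ0.le (Real.abs_cos_le_one t)
    · show dist (ρ * Real.sin t) (Real.sin t) ≤ δ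
      rw [Real.dist_eq, show ρ * Real.sin t - Real.sin t = δ * Real.sin t by rw [hρdef]; ring,
        abs_mul, abs_of_pos hδ0]
      exact mul_le_of_le_one_right hδ0.le (Real.abs_sin_le_one t)
    · show dist (0:ℝ) 0 ≤ δ
      simp [hδ0.le]
  -- the velocity of the circle
  set v : ℝ → (Fin 3 → ℝ) := fun t => ![-(ρ * Real.sin t), ρ * Real.cos t, 0] with hvdef
  have hc : ∀ t : ℝ, HasDerivAt c (v t) t := by
    intro t
    rw [hasDerivAt_pi]
    intro i
    fin_cases i
    · show HasDerivAt (fun t => (c t) 0) ((v t) 0) t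
      simp only [hcdef, hvdef, Matrix.cons_val_zero]
      simpa [mul_comm] using (Real.hasDerivAt_cos t).const_mul ρ
    · show HasDerivAt (fun t => (c t) 1) ((v t) 1) t
      simp only [hcdef, hvdef, Matrix.cons_val_one, Matrix.head_cons]
      simpa [mul_comm] using (Real.hasDerivAt_sin t).const_mul ρ
    · show HasDerivAt (fun t => (c t) 2) ((v t) 2) t
      simp only [hcdef, hvdef]
      norm_num
      exact hasDerivAt_const t 0
  -- key computation: ω along the circle
  have hkey : ∀ t : ℝ, ωCyl (c t) (v t) = wPhi ρ := by
    intro t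
    have hcos := Real.sin_sq_add_cos_sq t
    have hss : (c t 0) ^ 2 + (c t 1) ^ 2 = ρ ^ 2 := by
      simp only [hcdef, Matrix.cons_val_zero, Matrix.cons_val_one, Matrix.head_cons]
      nlinarith
    rw [ωCyl]
    rw [hss, Real.sqrt_sq hρ0.le]
    simp only [ContinuousLinearMap.add_apply, ContinuousLinearMap.coe_smul', Pi.smul_apply,
      ContinuousLinearMap.proj_apply, smul_eq_mul, hcdef, hvdef,
      Matrix.cons_val_zero, Matrix.cons_val_one, Matrix.head_cons]
    field_simp
    linear_combination (wPhi ρ) * hcos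
  -- derivative of f along the circle
  have hh : ∀ t ∈ Set.Icc 0 (2 * Real.pi),
      HasDerivAt (fun t => f (c t)) (lam (c t) * wPhi ρ) t := by
    intro t ht
    have hpU := hmem t ht
    have hfd : DifferentiableAt ℝ f (c t) :=
      (hf.contDiffAt (hUopen.mem_nhds hpU)).differentiableAt one_ne_zero
    have hF := hfd.hasFDerivAt.comp_hasDerivAt t (hc t)
    rw [hDf (c t) hpU] at hF
    refine hF.congr_deriv ?_
    rw [ContinuousLinearMap.smul_apply, smul_eq_mul, hkey t]
  -- Rolle
  have hEnds : f (c 0) = f (c (2 * Real.pi)) := by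
    simp [hcdef]
  have hcont : ContinuousOn (fun t => f (c t)) (Set.Icc 0 (2 * Real.pi)) :=
    fun t ht => (hh t ht).continuousAt.continuousWithinAt
  obtain ⟨t, ht, h0⟩ := exists_hasDerivAt_eq_zero Real.two_pi_pos hcont hEnds
    (fun x hx => hh x (Set.Ioo_subset_Icc_self hx))
  have hwρ : wPhi ρ ≠ 0 := by
    rw [wPhi, if_neg (not_lt.mpr hρ1.le)]
    linarith
  exact mul_ne_zero (hlam _ (hmem t (Set.Ioo_subset_Icc_self ht))) hwρ h0
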